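/- Let h be a Lie algebra, ρ : h → gl(V) a Lie algebra representation with dim V = dim h, and φ : h → V a bijective linear map satisfying the 1-cocycle condition φ([x,y]) = ρ(x)φ(y) - ρ(y)φ(x) for all x,y ∈ h. Then the product x*y = φ⁻¹(ρ(x)φ(y)) is left-symmetric and satisfies x*y - y*x = [x,y]. -/

import Mathlib

attribute [local instance 100] LieRing.ofAssociativeRing

theorem lsa_from_bijective_cocycle (h V : Type*) [LieRing h] [LieAlgebra ℝ h]
    [FiniteDimensional ℝ h] [AddCommGroup V] [Module ℝ V] [FiniteDimensional ℝ V]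
    (hdim : Module.finrank ℝ V = Module.finrank ℝ h)
    (ρ : h →ₗ⁅ℝ⁆ Module.End ℝ V)
    (φ : h ≃ₗ[ℝ] V)
    (hcocycle : ∀ x y, φ ⁅x, y⁆ = ρ x (φ y) - ρ y (φ x))
    (star : h → h → h)
    (hstar : ∀ x y, star x y = φ.symm (ρ x (φ y))) :
    (∀ x y z, star (star x y) z - star x (star y z) = star (star y x) z - star y (star x z)) ∧
    (∀ x y, star x y - star y x = ⁅x, y⁆) := by
  have key : ∀ x y, star x y - star y x = ⁅x, y⁆ := by
    intro x y
    rw [hstar, hstar, ← map_sub, ← hcocycle]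
    exact φ.symm_apply_apply _
  refine ⟨?_, key⟩
  intro x y z
  apply φ.injective
  have hφ : ∀ a b, φ (star a b) = ρ a (φ b) := fun a b => by
    rw [hstar]; exact φ.apply_symm_apply _
  rw [map_sub, map_sub, hφ, hφ, hφ, hφ, hφ, hφ]
  have h2 : ρ (star x y) - ρ (star y x) = ρ x * ρ y - ρ y * ρ x := by
    rw [← map_sub, key, LieHom.map_lie]
    rfl
  have h3 := congrArg (fun f => f (φ z)) h2
  simp only [LinearMap.sub_apply, Module.End.mul_apply] at h3
  rw [sub_eq_sub_iff_sub_eq_sub]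
  exact h3
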